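/- Fix a directed edge e and suppose ‖x‖_∞ = max_{ē∈E} |x_ē| < 1/(Δ−1), where Δ ≥ 2 is the maximum vertex degree of 𝒢. Then Σ_ℓ λ(ℓ)/|ℓ| taken over all rooted loops that visit −e at least once and never visit e equals Σ_ℓ λ(ℓ)/|ℓ| taken over all rooted loops that visit e at least once and never visit −e. -/

import Mathlib

open scoped BigOperators

/-- The straight line segment drawn for an (unordered) edge, given the
positions of the vertices in the complex plane. -/
def segOf {α : Type*} (pos : α → ℂ) : Sym2 α → Set ℂ :=
  Sym2.lift ⟨fun u v => segment ℝ (pos u) (pos v), fun u v => segment_symm ℝ (pos u) (pos v)⟩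

/-- A finite graph embedded in the complex plane: vertices are distinct points
of `ℂ`, edges are unordered pairs of distinct vertices drawn as straight line
segments which pairwise intersect only at common endpoints, and no vertex lies
on an edge which does not contain it. -/
structure PlaneGraph where
  V : Type
  fintypeV : Fintype V
  decEqV : DecidableEq V
  pos : V → ℂ
  pos_inj : Function.Injective pos
  E : Finset (Sym2 V)
  not_diag : ∀ e ∈ E, ¬ e.IsDiag
  edges_meet : ∀ e₁ ∈ E, ∀ e₂ ∈ E, e₁ ≠ e₂ → ∀ p : ℂ,
    p ∈ segOf pos e₁ → p ∈ segOf pos e₂ → ∃ w : V, w ∈ e₁ ∧ w ∈ e₂ ∧ p = pos w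
  vertex_on_edge : ∀ e ∈ E, ∀ w : V, pos w ∈ segOf pos e → w ∈ e

attribute [instance] PlaneGraph.fintypeV PlaneGraph.decEqV

namespace PlaneGraph

variable (G : PlaneGraph)

/-- A directed edge: an ordered pair of vertices whose underlying
unordered pair is an edge of the graph. -/
abbrev DEdge : Type := {p : G.V × G.V // s(p.1, p.2) ∈ G.E}

/-- The reversal `-e` of a directed edge. -/
def rev (e : G.DEdge) : G.DEdge :=
  ⟨(e.val.2, e.val.1), by rw [Sym2.eq_swap]; exact e.property⟩

/-- The undirected version `ē` of a directed edge. -/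
def undir (e : G.DEdge) : Sym2 G.V := s(e.val.1, e.val.2)

/-- The turning angle `∠(e,g) = Arg((h_g - t_g)/(h_e - t_e)) ∈ (-π, π]`. -/
noncomputable def tangle (e g : G.DEdge) : ℝ :=
  Complex.arg ((G.pos g.val.2 - G.pos g.val.1) / (G.pos e.val.2 - G.pos e.val.1))

/-- The Kac–Ward transition matrix `Λ`, indexed by directed edges. -/
noncomputable def transMatrix (x : Sym2 G.V → ℝ) : Matrix G.DEdge G.DEdge ℂ :=
  fun e g =>
    if e.val.2 = g.val.1 ∧ g ≠ G.rev e then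
      (x (G.undir e) : ℂ) * Complex.exp (Complex.I / 2 * (G.tangle e g : ℂ))
    else 0

/-- A non-backtracking walk of length `n ≥ 1`, encoded as the list
`(w₁, …, w_{n+1})` of its `n+1` directed edges: consecutive edges are
incident head-to-tail and the walk never immediately reverses an edge. -/
def IsWalk (l : List G.DEdge) : Prop :=
  2 ≤ l.length ∧ l.Chain' (fun e g => e.val.2 = g.val.1 ∧ g ≠ G.rev e)

/-- The length `|w|` (number of steps) of a walk given as a list of edges. -/
def len (l : List G.DEdge) : ℕ := l.length - 1

/-- The weight `λ(w) = ∏_{i=1}^{n} Λ_{w_i, w_{i+1}}` of a walk. -/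
noncomputable def wlam (x : Sym2 G.V → ℝ) (l : List G.DEdge) : ℂ :=
  (List.zipWith (fun e g => G.transMatrix x e g) l l.tail).prod

/-- The edge weight `x(w) = ∏_{i=1}^{n} x_{\bar{w_i}}` of a walk
(the weight of the last edge is not included). -/
def wx (x : Sym2 G.V → ℝ) (l : List G.DEdge) : ℝ :=
  (l.dropLast.map (fun e => x (G.undir e))).prod

/-- The total turning angle `α(w) = Σ_{i=1}^{n} ∠(w_i, w_{i+1})` of a walk. -/
noncomputable def walpha (l : List G.DEdge) : ℝ :=
  (List.zipWith (fun e g => G.tangle e g) l l.tail).sum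

/-- The reversal `w⁻¹ = (-w_{n+1}, …, -w₁)` of a walk. -/
def wrev (l : List G.DEdge) : List G.DEdge := (l.map G.rev).reverse

/-- The concatenation `w ⊕ w'` of two walks, the first ending with the
directed edge with which the second starts. -/
def wconcat (l l' : List G.DEdge) : List G.DEdge := l ++ l'.tail

/-- A (rooted) loop: a walk of length at least `2` which starts and ends
with the same directed edge. -/
def IsLoop (l : List G.DEdge) : Prop :=
  G.IsWalk l ∧ 3 ≤ l.length ∧ l.head? = l.getLast?

/-- The number of times a loop `ℓ = (ℓ₁, …, ℓ_{n+1})` visits a directed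
edge `e`, i.e. the number of occurrences of `e` among `ℓ₁, …, ℓ_n`. -/
def visits (l : List G.DEdge) (e : G.DEdge) : ℕ := l.dropLast.count e

/-- A loop `ℓ` of length `n` is self-avoiding if each vertex appearing in it
appears in exactly two of the directed edges `ℓ₁, …, ℓ_n`. -/
def SelfAvoiding (l : List G.DEdge) : Prop :=
  G.IsLoop l ∧ ∀ v : G.V,
    l.dropLast.countP (fun e => decide (v = e.val.1 ∨ v = e.val.2)) ≠ 0 →
    l.dropLast.countP (fun e => decide (v = e.val.1 ∨ v = e.val.2)) = 2

/-- The degree of a vertex: the number of edges containing it. -/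
def degV (v : G.V) : ℕ := (G.E.filter (fun e => v ∈ e)).card

/-- A finite set of edges is even if every vertex belongs to an even number
of its edges. -/
def IsEvenSet (H : Finset (Sym2 G.V)) : Prop :=
  ∀ v : G.V, Even ((H.filter (fun e => v ∈ e)).card)

instance : DecidablePred G.IsEvenSet := fun H =>
  decidable_of_iff (∀ v : G.V, Even ((H.filter (fun e => v ∈ e)).card)) Iff.rfl

/-- The generating function `Z = Σ_{H even} ∏_{ē ∈ H} x_ē` of even
subgraphs. -/
def Z (x : Sym2 G.V → ℝ) : ℝ :=
  ∑ H ∈ G.E.powerset.filter G.IsEvenSet, ∏ e ∈ H, x e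

end PlaneGraph

namespace PlaneGraph

variable (G : PlaneGraph)

/-- The displacement vector of a directed edge. -/
noncomputable def dd (e : G.DEdge) : ℂ := G.pos e.val.2 - G.pos e.val.1

lemma ends_ne (e : G.DEdge) : e.val.1 ≠ e.val.2 := by
  have h := G.not_diag _ e.property
  simpa [Sym2.mk_isDiag_iff] using h

lemma dd_ne_zero (e : G.DEdge) : G.dd e ≠ 0 := by
  simp only [dd, sub_ne_zero]
  exact fun h => G.ends_ne e (G.pos_inj h).symm

@[simp] lemma rev_rev (e : G.DEdge) : G.rev (G.rev e) = e := rfl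

lemma rev_injective : Function.Injective G.rev := by
  intro a b h
  have := congrArg G.rev h
  simpa using this

@[simp] lemma undir_rev (e : G.DEdge) : G.undir (G.rev e) = G.undir e := by
  simp [undir, rev, Sym2.eq_swap]

/-- The step relation of a non-backtracking walk. -/
def Step (e g : G.DEdge) : Prop := e.val.2 = g.val.1 ∧ g ≠ G.rev e

lemma tangle_eq (e g : G.DEdge) : G.tangle e g = Complex.arg (G.dd g / G.dd e) := rfl

end PlaneGraph

namespace PlaneGraph
variable (G : PlaneGraph)

lemma no_pi_turn {e g : G.DEdge} (h1 : e.val.2 = g.val.1) (h2 : g ≠ G.rev e) :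
    Complex.arg (G.dd g / G.dd e) ≠ Real.pi := by
  intro hπ
  set u := e.val.1 with hu
  set v := e.val.2 with hv
  set w := g.val.2 with hw
  -- the ratio is a negative real number
  rw [Complex.arg_eq_pi_iff] at hπ
  set c : ℝ := (G.dd g / G.dd e).re with hc
  have hclt : c < 0 := hπ.1
  have hratio : G.dd g / G.dd e = (c : ℂ) := by
    apply Complex.ext
    · rfl
    · simpa using hπ.2
  have hdd : G.dd g = (c : ℂ) * G.dd e := by
    rw [← hratio]
    field_simp [G.dd_ne_zero e]
  -- unfold the displacement
  have hkey : G.pos w - G.pos v = (c : ℂ) * (G.pos v - G.pos u) := by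
    simpa only [dd, ← hu, ← hv, ← hw, ← h1] using hdd
  set t : ℝ := -c with htdef
  have ht : 0 < t := by simpa [htdef] using hclt
  set s : ℝ := min 1 t⁻¹ with hsdef
  have hs0 : 0 < s := lt_min one_pos (inv_pos.2 ht)
  have hs1 : s ≤ 1 := min_le_left _ _
  have hst : s * t ≤ 1 := by
    calc s * t ≤ t⁻¹ * t := by
          apply mul_le_mul_of_nonneg_right (min_le_right _ _) ht.le
      _ = 1 := inv_mul_cancel₀ ht.ne'
  set p : ℂ := G.pos v + (s : ℂ) * (G.pos w - G.pos v) with hpdef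
  -- p lies on the segment of g
  have hEe : s(u, v) ∈ G.E := e.property
  have hEg : s(v, w) ∈ G.E := by rw [h1, hw]; exact g.property
  have hvw : v ≠ w := by rw [h1, hw]; exact G.ends_ne g
  have huv : u ≠ v := G.ends_ne e
  have hpseg2 : p ∈ segOf G.pos s(v, w) := by
    simp only [segOf, Sym2.lift_mk]
    refine ⟨1 - s, s, by linarith, hs0.le, by ring, ?_⟩
    simp only [hpdef]
    push_cast
    ring_nf
    rw [Complex.real_smul, Complex.real_smul]
    push_cast
    ring
  have hpseg1 : p ∈ segOf G.pos s(u, v) := by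
    simp only [segOf, Sym2.lift_mk]
    refine ⟨s * t, 1 - s * t, by positivity, by linarith, by ring, ?_⟩
    have : p = G.pos v + (s : ℂ) * ((c : ℂ) * (G.pos v - G.pos u)) := by
      rw [hpdef, hkey]
    rw [this]
    rw [Complex.real_smul, Complex.real_smul]
    push_cast [htdef]
    ring
  have hne : s(u, v) ≠ s(v, w) := by
    intro hEq
    rw [Sym2.eq_iff] at hEq
    rcases hEq with ⟨h3, h4⟩ | ⟨h3, h4⟩
    · exact huv h3
    · apply h2
      apply Subtype.ext
      have : g.val = (v, u) := by
        apply Prod.ext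
        · exact (h1).symm
        · rw [← hw, ← h3]
      rw [this]; rfl
  obtain ⟨w₀, hw₀1, hw₀2, hp⟩ := G.edges_meet _ hEe _ hEg hne p hpseg1 hpseg2
  rw [Sym2.mem_iff] at hw₀1 hw₀2
  have hwu_ne : u ≠ w := by
    intro h3
    apply h2
    apply Subtype.ext
    have : g.val = (v, u) := by
      apply Prod.ext
      · exact h1.symm
      · rw [← hw, ← h3]
    rw [this]; rfl
  rcases hw₀1 with h3 | h3
  · rcases hw₀2 with h4 | h4
    · exact huv (h3.symm.trans h4)
    · exact hwu_ne (h3.symm.trans h4)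
  · -- w₀ = v, so p = pos v
    have hpv : p = G.pos v := by rw [hp, h3]
    have : (s : ℂ) * (G.pos w - G.pos v) = 0 := by
      have := hpv
      rw [hpdef] at this
      linear_combination this
    rcases mul_eq_zero.mp this with h4 | h4
    · exact hs0.ne' (by exact_mod_cast h4)
    · exact hvw (G.pos_inj (sub_eq_zero.mp h4)).symm

end PlaneGraph

namespace PlaneGraph
variable (G : PlaneGraph)

lemma tangle_rev {e g : G.DEdge} (h1 : e.val.2 = g.val.1) (h2 : g ≠ G.rev e) :
    G.tangle (G.rev g) (G.rev e) = - G.tangle e g := by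
  have hratio : G.dd (G.rev e) / G.dd (G.rev g) = (G.dd g / G.dd e)⁻¹ := by
    have he : G.dd (G.rev e) = -(G.dd e) := by simp [dd, rev]
    have hg : G.dd (G.rev g) = -(G.dd g) := by simp [dd, rev]
    rw [he, hg, neg_div_neg_eq, inv_div]
  rw [tangle_eq, tangle_eq, hratio, Complex.arg_inv,
    if_neg (G.no_pi_turn h1 h2)]

lemma walpha_nil : G.walpha [] = 0 := rfl

lemma walpha_single (a : G.DEdge) : G.walpha [a] = 0 := rfl

lemma walpha_cons (a b : G.DEdge) (t : List G.DEdge) :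
    G.walpha (a :: b :: t) = G.tangle a b + G.walpha (b :: t) := by
  simp [walpha]

lemma walpha_concat : ∀ (xs : List G.DEdge) (y z : G.DEdge),
    xs.getLast? = some z → G.walpha (xs ++ [y]) = G.walpha xs + G.tangle z y
  | [], y, z, h => by simp at h
  | [a], y, z, h => by
    simp only [List.getLast?_singleton, Option.some.injEq] at h
    subst h
    simp [walpha_cons, walpha_single, walpha_nil]
  | a :: b :: t, y, z, h => by
    rw [List.getLast?_cons_cons] at h
    have ih := walpha_concat (b :: t) y z h
    simp only [List.cons_append, walpha_cons] at *
    rw [ih]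
    ring

lemma wrev_cons (a : G.DEdge) (t : List G.DEdge) :
    G.wrev (a :: t) = G.wrev t ++ [G.rev a] := by
  simp [wrev]

lemma wrev_ne_nil (a : G.DEdge) (t : List G.DEdge) : G.wrev (a :: t) ≠ [] := by
  simp [wrev]

lemma getLast?_wrev_cons (a : G.DEdge) (t : List G.DEdge) :
    (G.wrev (a :: t)).getLast? = some (G.rev a) := by
  rw [wrev_cons]
  exact List.getLast?_concat

lemma walpha_wrev : ∀ (l : List G.DEdge), l.Chain' (G.Step) →
    G.walpha (G.wrev l) = - G.walpha l
  | [], _ => by simp [wrev, walpha_nil]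
  | [a], _ => by simp [wrev, walpha_single]
  | a :: b :: t, hc => by
    obtain ⟨hab, hc'⟩ := List.isChain_cons_cons.mp hc
    have ih := walpha_wrev (b :: t) hc'
    rw [wrev_cons, G.walpha_concat (G.wrev (b :: t)) (G.rev a) (G.rev b)
        (G.getLast?_wrev_cons b t), ih, G.tangle_rev hab.1 hab.2, walpha_cons]
    ring

end PlaneGraph

namespace PlaneGraph
variable (G : PlaneGraph)

lemma wlam_nil (x : Sym2 G.V → ℝ) : G.wlam x [] = 1 := rfl

lemma wlam_single (x : Sym2 G.V → ℝ) (a : G.DEdge) : G.wlam x [a] = 1 := rfl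

lemma wlam_cons (x : Sym2 G.V → ℝ) (a b : G.DEdge) (t : List G.DEdge) :
    G.wlam x (a :: b :: t) = G.transMatrix x a b * G.wlam x (b :: t) := by
  simp [wlam]

lemma wx_nil (x : Sym2 G.V → ℝ) : G.wx x [] = 1 := rfl

lemma wx_single (x : Sym2 G.V → ℝ) (a : G.DEdge) : G.wx x [a] = 1 := by
  simp [wx]

lemma wx_cons (x : Sym2 G.V → ℝ) (a b : G.DEdge) (t : List G.DEdge) :
    G.wx x (a :: b :: t) = x (G.undir a) * G.wx x (b :: t) := by
  simp [wx, List.dropLast_cons₂]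

lemma wlam_eq_wx_mul_exp (x : Sym2 G.V → ℝ) :
    ∀ (l : List G.DEdge), l.Chain' G.Step →
      G.wlam x l = (G.wx x l : ℂ) * Complex.exp (Complex.I / 2 * (G.walpha l : ℂ))
  | [], _ => by simp [wlam_nil, wx_nil, walpha_nil]
  | [a], _ => by simp [wlam_single, wx_single, walpha_single]
  | a :: b :: t, hc => by
    obtain ⟨hab, hc'⟩ := List.isChain_cons_cons.mp hc
    have ih := wlam_eq_wx_mul_exp x (b :: t) hc'
    rw [wlam_cons, ih, wx_cons, walpha_cons, transMatrix, if_pos ⟨hab.1, hab.2⟩]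
    push_cast
    rw [mul_add, Complex.exp_add]
    ring

/-- The unit tangent vector of a directed edge. -/
noncomputable def uu (e : G.DEdge) : ℂ := G.dd e / (‖G.dd e‖ : ℂ)

lemma uu_ne_zero (e : G.DEdge) : G.uu e ≠ 0 := by
  apply div_ne_zero (G.dd_ne_zero e)
  simpa using G.dd_ne_zero e

lemma exp_tangle (a b : G.DEdge) :
    Complex.exp (Complex.I * (G.tangle a b : ℂ)) = G.uu b / G.uu a := by
  have hz : G.dd b / G.dd a ≠ 0 := div_ne_zero (G.dd_ne_zero b) (G.dd_ne_zero a)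
  have h := Complex.norm_mul_exp_arg_mul_I (G.dd b / G.dd a)
  have habs : (‖G.dd b / G.dd a‖ : ℂ) ≠ 0 := by simpa using hz
  have hexp : Complex.exp ((Complex.arg (G.dd b / G.dd a) : ℂ) * Complex.I)
      = (G.dd b / G.dd a) / (‖G.dd b / G.dd a‖ : ℂ) := by
    rw [eq_div_iff habs]
    linear_combination h
  rw [tangle_eq, mul_comm, hexp, uu, uu]
  rw [norm_div]
  have ha := G.dd_ne_zero a
  have hb := G.dd_ne_zero b
  have ha' : (‖G.dd a‖ : ℂ) ≠ 0 := by simpa using ha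
  have hb' : (‖G.dd b‖ : ℂ) ≠ 0 := by simpa using hb
  push_cast
  field_simp

lemma exp_walpha : ∀ (l : List G.DEdge) (hne : l ≠ []) (z : G.DEdge), l.head? = some z →
    Complex.exp (Complex.I * (G.walpha l : ℂ)) = G.uu (l.getLast hne) / G.uu z
  | [], hne, z, h => absurd rfl hne
  | [a], hne, z, h => by
    simp only [List.head?_cons, Option.some.injEq] at h
    subst h
    simp [walpha_single, div_self (G.uu_ne_zero a)]
  | a :: b :: t, hne, z, h => by
    simp only [List.head?_cons, Option.some.injEq] at h
    subst h
    have ih := exp_walpha (b :: t) (by simp) b rfl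
    rw [walpha_cons, List.getLast_cons (by simp)]
    push_cast
    rw [mul_add, Complex.exp_add, exp_tangle, ih]
    have := G.uu_ne_zero a
    have := G.uu_ne_zero b
    field_simp

lemma walpha_loop_int (l : List G.DEdge) (hl : G.IsLoop l) :
    ∃ n : ℤ, G.walpha l = n * (2 * Real.pi) := by
  obtain ⟨⟨hlen, hchain⟩, hlen3, hht⟩ := hl
  have hne : l ≠ [] := by rintro rfl; simp at hlen
  have hhead : l.head? = some (l.head hne) := List.head?_eq_head hne
  have hexp := G.exp_walpha l hne (l.head hne) hhead
  have hlast : l.getLast hne = l.head hne := by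
    have h1 : l.getLast? = some (l.getLast hne) :=
      List.getLast?_eq_getLast _
    rw [← hht, hhead] at h1
    exact (Option.some.injEq _ _ ▸ h1).symm
  rw [hlast, div_self (G.uu_ne_zero _)] at hexp
  rw [Complex.exp_eq_one_iff] at hexp
  obtain ⟨n, hn⟩ := hexp
  refine ⟨n, ?_⟩
  have : (G.walpha l : ℂ) = ((n * (2 * Real.pi) : ℝ) : ℂ) := by
    have hI : (Complex.I : ℂ) ≠ 0 := Complex.I_ne_zero
    field_simp at hn ⊢
    push_cast at hn ⊢
    have : Complex.I * (G.walpha l : ℂ) = (n : ℂ) * (2 * Real.pi) * Complex.I := by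
      rw [hn]; ring
    linear_combination hn
  exact_mod_cast this

end PlaneGraph

namespace PlaneGraph
variable (G : PlaneGraph)

lemma wrev_wrev (l : List G.DEdge) : G.wrev (G.wrev l) = l := by
  simp only [wrev, ← List.map_reverse, List.reverse_reverse, List.map_map]
  have : (G.rev ∘ G.rev) = id := by funext a; simp [Function.comp]
  rw [this, List.map_id]

lemma len_wrev (l : List G.DEdge) : G.len (G.wrev l) = G.len l := by
  simp [len, wrev]

lemma loop_decomp (l : List G.DEdge) (hl : G.IsLoop l) :
    ∃ (a : G.DEdge) (t : List G.DEdge) (ht : t ≠ []),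
      l = a :: t ∧ t.getLast ht = a := by
  obtain ⟨⟨hlen, _⟩, _, hht⟩ := hl
  match l with
  | [] => simp at hlen
  | [a] => simp at hlen
  | a :: b :: t =>
    refine ⟨a, b :: t, by simp, rfl, ?_⟩
    have h1 : (a :: b :: t).getLast? = some ((b :: t).getLast (by simp)) := by
      rw [List.getLast?_eq_getLast (l := a :: b :: t) (by simp), List.getLast_cons (by simp)]
    rw [← hht] at h1
    simpa using h1.symm

lemma dropLast_reverse {α : Type*} (l : List α) :
    l.reverse.dropLast = l.tail.reverse := by
  have h := List.tail_reverse (l := l.reverse)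
  rw [List.reverse_reverse] at h
  rw [← List.reverse_reverse (l.reverse.dropLast), ← h]

lemma dropLast_wrev (a : G.DEdge) (t : List G.DEdge) :
    (G.wrev (a :: t)).dropLast = (t.map G.rev).reverse := by
  rw [wrev, dropLast_reverse]
  rfl

lemma wx_wrev (x : Sym2 G.V → ℝ) (l : List G.DEdge) (hl : G.IsLoop l) :
    G.wx x (G.wrev l) = G.wx x l := by
  obtain ⟨a, t, ht, rfl, hlast⟩ := G.loop_decomp l hl
  have htt : t = t.dropLast ++ [a] := by
    conv_lhs => rw [← List.dropLast_append_getLast ht]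
    rw [hlast]
  rw [wx, wx, dropLast_wrev, List.dropLast_cons_of_ne_nil ht]
  have hcomp : ((fun e => x (G.undir e)) ∘ G.rev) = fun e => x (G.undir e) := by
    funext b; simp [Function.comp]
  rw [← List.map_reverse, List.map_map, hcomp, List.map_reverse, List.prod_reverse]
  conv_lhs => rw [htt]
  simp [List.prod_append, mul_comm]

lemma visits_wrev (l : List G.DEdge) (hl : G.IsLoop l) (f : G.DEdge) :
    G.visits (G.wrev l) f = G.visits l (G.rev f) := by
  obtain ⟨a, t, ht, rfl, hlast⟩ := G.loop_decomp l hl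
  have htt : t = t.dropLast ++ [a] := by
    conv_lhs => rw [← List.dropLast_append_getLast ht]
    rw [hlast]
  rw [visits, visits, dropLast_wrev, List.dropLast_cons_of_ne_nil ht]
  rw [List.count_reverse]
  have h1 : (t.map G.rev).count f = t.count (G.rev f) := by
    have : f = G.rev (G.rev f) := by simp
    rw [this, List.count_map_of_injective _ G.rev G.rev_injective, rev_rev]
  rw [h1]
  conv_lhs => rw [htt]
  simp [List.count_append, List.count_cons]

lemma isLoop_wrev (l : List G.DEdge) (hl : G.IsLoop l) : G.IsLoop (G.wrev l) := by
  obtain ⟨⟨hlen, hchain⟩, hlen3, hht⟩ := hl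
  have hlenrev : (G.wrev l).length = l.length := by simp [wrev]
  refine ⟨⟨by omega, ?_⟩, by omega, ?_⟩
  · unfold List.Chain' at hchain ⊢
    rw [wrev, List.isChain_reverse, List.isChain_map]
    apply hchain.imp
    rintro a b ⟨h1, h2⟩
    constructor
    · simp [rev, h1]
    · simp only [rev_rev]
      intro hba
      exact h2 (by rw [hba])
  · rw [wrev, List.head?_reverse, List.getLast?_reverse, List.getLast?_map,
      List.head?_map, hht]

lemma exp_I_walpha_loop (l : List G.DEdge) (hl : G.IsLoop l) :
    Complex.exp (Complex.I * (G.walpha l : ℂ)) = 1 := by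
  obtain ⟨⟨hlen, hchain⟩, hlen3, hht⟩ := hl
  have hne : l ≠ [] := by rintro rfl; simp at hlen
  have hhead : l.head? = some (l.head hne) := List.head?_eq_head hne
  have hexp := G.exp_walpha l hne (l.head hne) hhead
  have hlast : l.getLast hne = l.head hne := by
    have h1 : l.getLast? = some (l.getLast hne) := List.getLast?_eq_getLast _
    rw [← hht, hhead] at h1
    simpa using h1.symm
  rw [hlast, div_self (G.uu_ne_zero _)] at hexp
  exact hexp

lemma wlam_wrev (x : Sym2 G.V → ℝ) (l : List G.DEdge) (hl : G.IsLoop l) :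
    G.wlam x (G.wrev l) = G.wlam x l := by
  have hlrev := G.isLoop_wrev l hl
  have hchain : l.Chain' G.Step := hl.1.2
  have hchainrev : (G.wrev l).Chain' G.Step := hlrev.1.2
  rw [G.wlam_eq_wx_mul_exp x _ hchainrev, G.wlam_eq_wx_mul_exp x _ hchain,
    G.wx_wrev x l hl, G.walpha_wrev l hchain]
  congr 1
  set z := Complex.exp (Complex.I / 2 * (G.walpha l : ℂ)) with hz
  have hsq : z * z = 1 := by
    rw [hz, ← Complex.exp_add]
    have : Complex.I / 2 * (G.walpha l : ℂ) + Complex.I / 2 * (G.walpha l : ℂ)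
        = Complex.I * (G.walpha l : ℂ) := by ring
    rw [this]
    exact G.exp_I_walpha_loop l hl
  have hinv : z⁻¹ = z := inv_eq_of_mul_eq_one_right hsq
  calc Complex.exp (Complex.I / 2 * ((-G.walpha l : ℝ) : ℂ))
      = z⁻¹ := by
        rw [hz, ← Complex.exp_neg]
        congr 1
        push_cast
        ring
    _ = z := hinv

end PlaneGraph

/-- The signed measure of the loops visiting `-e` and not `e` equals the
signed measure of the loops visiting `e` and not `-e`. -/
theorem loop_sum_rev_eq_loop_sum (G : PlaneGraph) (x : Sym2 G.V → ℝ) (Δ : ℕ)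
    (hΔ : 2 ≤ Δ) (hdeg : ∀ v : G.V, G.degV v ≤ Δ)
    (hx : ∀ e ∈ G.E, |x e| < 1 / ((Δ : ℝ) - 1)) (e : G.DEdge) :
    ∑' ℓ : {l : List G.DEdge //
        G.IsLoop l ∧ 1 ≤ G.visits l (G.rev e) ∧ G.visits l e = 0},
      G.wlam x ℓ.val / (G.len ℓ.val : ℂ) =
    ∑' ℓ : {l : List G.DEdge //
        G.IsLoop l ∧ 1 ≤ G.visits l e ∧ G.visits l (G.rev e) = 0},
      G.wlam x ℓ.val / (G.len ℓ.val : ℂ) := by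
  have hmem : ∀ l : List G.DEdge,
      (G.IsLoop l ∧ 1 ≤ G.visits l (G.rev e) ∧ G.visits l e = 0) →
      (G.IsLoop (G.wrev l) ∧ 1 ≤ G.visits (G.wrev l) e ∧
        G.visits (G.wrev l) (G.rev e) = 0) := by
    rintro l ⟨hl, h1, h2⟩
    refine ⟨G.isLoop_wrev l hl, ?_, ?_⟩
    · rw [G.visits_wrev l hl]; exact h1
    · rw [G.visits_wrev l hl, G.rev_rev]; exact h2
  have hmem' : ∀ l : List G.DEdge,
      (G.IsLoop l ∧ 1 ≤ G.visits l e ∧ G.visits l (G.rev e) = 0) →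
      (G.IsLoop (G.wrev l) ∧ 1 ≤ G.visits (G.wrev l) (G.rev e) ∧
        G.visits (G.wrev l) e = 0) := by
    rintro l ⟨hl, h1, h2⟩
    refine ⟨G.isLoop_wrev l hl, ?_, ?_⟩
    · rw [G.visits_wrev l hl, G.rev_rev]; exact h1
    · rw [G.visits_wrev l hl]; exact h2
  let φ : {l : List G.DEdge //
        G.IsLoop l ∧ 1 ≤ G.visits l (G.rev e) ∧ G.visits l e = 0} ≃
      {l : List G.DEdge //
        G.IsLoop l ∧ 1 ≤ G.visits l e ∧ G.visits l (G.rev e) = 0} :=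
    { toFun := fun a => ⟨G.wrev a.val, hmem _ a.prop⟩
      invFun := fun b => ⟨G.wrev b.val, hmem' _ b.prop⟩
      left_inv := fun a => Subtype.ext (G.wrev_wrev a.val)
      right_inv := fun b => Subtype.ext (G.wrev_wrev b.val) }
  rw [← Equiv.tsum_eq φ (fun b : {l : List G.DEdge //
        G.IsLoop l ∧ 1 ≤ G.visits l e ∧ G.visits l (G.rev e) = 0} =>
      G.wlam x b.val / (G.len b.val : ℂ))]
  apply tsum_congr
  intro a
  simp only [φ, Equiv.coe_fn_mk]
  rw [G.wlam_wrev x a.val a.prop.1, G.len_wrev]
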